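/- arXiv:1411.6478 — 3 statements merged into one kernel-verified Lean document; each statement's English description precedes it below -/
import Mathlib

section
/- (Lemma 2, Propositions 1 and 2) In any execution of Algorithm 1, the successive values taken by the scalar logical clock total_i[i] at each process p_i are monotonically increasing, and the sequence of total_i[i] values included in the successive TOCOBC and CATCH_UP messages sent out by p_i is strictly increasing. -/
/-!
Operational model of Algorithm 1 (the `G`-fisheye (SC,CC)-broadcast algorithm).

`n` sequential asynchronous processes `p_0, …, p_{n-1}` (type `Fin n`) exchange
application messages of type `M` through reliable FIFO channels (one queue per
ordered pair of processes).  A proximity graph is a `SimpleGraph (Fin n)`.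
-/

namespace Fisheye

/-- A tuple `⟨m, s_caus, s_tot, sender⟩`, as carried by `TOCOBC` protocol
messages and as stored in the `pending` sets of Algorithm 1. -/
structure Tuple (n : ℕ) (M : Type) where
  msg : M
  scaus : Fin n → ℕ
  stot : ℕ
  sender : Fin n

/-- Protocol messages of Algorithm 1. -/
inductive PMsg (n : ℕ) (M : Type) where
  | tocobc (tp : Tuple n M)
  | catchup (d : ℕ) (sender : Fin n)

/-- Local state of a process: the vector clock `causal_i[1..n]`, the vector of
logical clock values `total_i[1..n]`, and the set `pending_i`. -/
structure ProcState (n : ℕ) (M : Type) where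
  causal : Fin n → ℕ
  total : Fin n → ℕ
  pending : Set (Tuple n M)

/-- Global configuration: local states plus channel contents.
`chan j i` is the FIFO queue of protocol messages in transit from `p_j`
to `p_i` (head = oldest message). -/
structure Config (n : ℕ) (M : Type) where
  proc : Fin n → ProcState n M
  chan : Fin n → Fin n → List (PMsg n M)

/-- Initially all clocks are `0`, all pending sets and channels are empty. -/
def initConfig (n : ℕ) (M : Type) : Config n M where
  proc := fun _ => { causal := fun _ => 0, total := fun _ => 0, pending := ∅ }
  chan := fun _ _ => []

/-- Lexicographic strict order on timestamps `⟨s_tot, sender⟩`. -/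
def tsLt {n : ℕ} (x y : ℕ × Fin n) : Prop :=
  x.1 < y.1 ∨ (x.1 = y.1 ∧ x.2 < y.2)

/-- Lexicographic (reflexive) order on timestamps. -/
def tsLe {n : ℕ} (x y : ℕ × Fin n) : Prop := tsLt x y ∨ x = y

/-- The set `C` at process `p_i`: pending tuples whose causal timestamp is
pointwise `≤ causal_i[·]`. -/
def inC {n : ℕ} {M : Type} (c : Config n M) (i : Fin n) (tp : Tuple n M) : Prop :=
  tp ∈ (c.proc i).pending ∧ ∀ k, tp.scaus k ≤ (c.proc i).causal k

/-- The set `T1` at `p_i`: tuples of `C` whose sender `p_j` satisfies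
`⟨total_i[k], k⟩ > ⟨s_tot, j⟩` for every neighbor `p_k` of `p_j` in `G`. -/
def inT1 {n : ℕ} {M : Type} (G : SimpleGraph (Fin n)) (c : Config n M) (i : Fin n)
    (tp : Tuple n M) : Prop :=
  inC c i tp ∧ ∀ k, G.Adj tp.sender k → tsLt (tp.stot, tp.sender) ((c.proc i).total k, k)

/-- The set `T2` at `p_i`: tuples of `T1` such that every pending tuple whose
sender is a neighbor of `p_j` has a (lexicographically) larger timestamp. -/
def inT2 {n : ℕ} {M : Type} (G : SimpleGraph (Fin n)) (c : Config n M) (i : Fin n)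
    (tp : Tuple n M) : Prop :=
  inT1 G c i tp ∧ ∀ tp' ∈ (c.proc i).pending, G.Adj tp.sender tp'.sender →
    tsLt (tp.stot, tp.sender) (tp'.stot, tp'.sender)

/-- Transition labels: `p_i` toco-broadcasts `m`; `p_i` receives the head
`TOCOBC` (resp. `CATCH_UP`) message of the channel from `p_j`; `p_i`
toco-delivers the message of the pending tuple `tp`. -/
inductive Label (n : ℕ) (M : Type) where
  | broadcast (i : Fin n) (m : M)
  | recvToco (i j : Fin n)
  | recvCatchup (i j : Fin n)
  | deliver (i : Fin n) (tp : Tuple n M)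

/-- The transition relation of Algorithm 1. -/
inductive Step {n : ℕ} {M : Type} (G : SimpleGraph (Fin n)) :
    Config n M → Label n M → Config n M → Prop
  /-- `TOCO_broadcast(m)` at `p_i`: increment `total_i[i]`, send
  `TOCOBC(m, ⟨causal_i[·], total_i[i], i⟩)` to every other process, add it to
  `pending_i`, and increment `causal_i[i]`. -/
  | broadcast (c : Config n M) (i : Fin n) (m : M) :
      Step G c (.broadcast i m)
        { proc := Function.update c.proc i
            { causal := Function.update (c.proc i).causal i ((c.proc i).causal i + 1)
              total := Function.update (c.proc i).total i ((c.proc i).total i + 1)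
              pending := insert ⟨m, (c.proc i).causal, (c.proc i).total i + 1, i⟩
                           (c.proc i).pending }
          chan := fun a b =>
            if a = i ∧ b ≠ i then
              c.chan a b ++ [PMsg.tocobc ⟨m, (c.proc i).causal, (c.proc i).total i + 1, i⟩]
            else c.chan a b }
  /-- Reception by `p_i` of the head `TOCOBC(m, ⟨s_caus, s_tot, sender⟩)` of the
  channel from `p_j`: add the tuple to `pending_i`, set `total_i[sender] := s_tot`,
  and if `total_i[i] ≤ s_tot`, set `total_i[i] := s_tot + 1` and send
  `CATCH_UP(total_i[i], i)` to every other process. -/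
  | recvToco (c : Config n M) (i j : Fin n) (tp : Tuple n M) (rest : List (PMsg n M))
      (hhead : c.chan j i = PMsg.tocobc tp :: rest) :
      Step G c (.recvToco i j)
        { proc := Function.update c.proc i
            { causal := (c.proc i).causal
              total :=
                if (c.proc i).total i ≤ tp.stot then
                  Function.update (Function.update (c.proc i).total tp.sender tp.stot) i
                    (tp.stot + 1)
                else Function.update (c.proc i).total tp.sender tp.stot
              pending := insert tp (c.proc i).pending }
          chan := fun a b =>
            if a = j ∧ b = i then rest
            else if (c.proc i).total i ≤ tp.stot ∧ a = i ∧ b ≠ i then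
              c.chan a b ++ [PMsg.catchup (tp.stot + 1) i]
            else c.chan a b }
  /-- Reception by `p_i` of the head `CATCH_UP(d, s)` of the channel from `p_j`:
  set `total_i[s] := d`. -/
  | recvCatchup (c : Config n M) (i j : Fin n) (d : ℕ) (s : Fin n) (rest : List (PMsg n M))
      (hhead : c.chan j i = PMsg.catchup d s :: rest) :
      Step G c (.recvCatchup i j)
        { proc := Function.update c.proc i
            { causal := (c.proc i).causal
              total := Function.update (c.proc i).total s d
              pending := (c.proc i).pending }
          chan := fun a b => if a = j ∧ b = i then rest else c.chan a b }
  /-- The background task at `p_i`: toco-deliver the message of a tuple of `T2`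
  with lexicographically minimal timestamp `⟨s_tot, sender⟩`, remove it from
  `pending_i`, and (if its sender is not `p_i`) increment `causal_i[sender]`. -/
  | deliver (c : Config n M) (i : Fin n) (tp : Tuple n M)
      (hT2 : inT2 G c i tp)
      (hmin : ∀ tp', inT2 G c i tp' → tsLe (tp.stot, tp.sender) (tp'.stot, tp'.sender)) :
      Step G c (.deliver i tp)
        { proc := Function.update c.proc i
            { causal :=
                if tp.sender = i then (c.proc i).causal
                else Function.update (c.proc i).causal tp.sender
                       ((c.proc i).causal tp.sender + 1)
              total := (c.proc i).total
              pending := (c.proc i).pending \ {tp} }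
          chan := c.chan }

/-- Either a stuttering step (no transition) or a step of Algorithm 1. -/
def OptStep {n : ℕ} {M : Type} (G : SimpleGraph (Fin n)) (c : Config n M) :
    Option (Label n M) → Config n M → Prop
  | none, c' => c' = c
  | some l, c' => Step G c l c'

/-- An execution of Algorithm 1: an infinite sequence of configurations starting
in the initial configuration, each obtained from the previous one by (at most)
one transition.  Toco-broadcast (application) messages are assumed unique: no
message is toco-broadcast twice. -/
structure Execution (n : ℕ) (M : Type) (G : SimpleGraph (Fin n)) where
  cfg : ℕ → Config n M
  lbl : ℕ → Option (Label n M)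
  init : cfg 0 = initConfig n M
  steps : ∀ t, OptStep G (cfg t) (lbl t) (cfg (t + 1))
  uniqueBcast : ∀ (m : M) (i i' : Fin n) (t t' : ℕ),
    lbl t = some (.broadcast i m) → lbl t' = some (.broadcast i' m) → t = t'

/-- `p_i` toco-broadcasts `m` at time `t`. -/
def Execution.broadcastsAt {n : ℕ} {M : Type} {G : SimpleGraph (Fin n)}
    (e : Execution n M G) (i : Fin n) (m : M) (t : ℕ) : Prop :=
  e.lbl t = some (.broadcast i m)

/-- `p_i` toco-delivers `m` at time `t`. -/
def Execution.deliversAt {n : ℕ} {M : Type} {G : SimpleGraph (Fin n)}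
    (e : Execution n M G) (i : Fin n) (m : M) (t : ℕ) : Prop :=
  ∃ tp : Tuple n M, tp.msg = m ∧ e.lbl t = some (.deliver i tp)

/-- The message causal order `⇝_M` of the execution: generated by (i) `m1`
toco-broadcast before `m2` by the same process, (ii) `m1` toco-delivered by a
process before that process toco-broadcasts `m2`, and transitivity. -/
inductive Execution.MsgCausal {n : ℕ} {M : Type} {G : SimpleGraph (Fin n)}
    (e : Execution n M G) : M → M → Prop
  | sameProc {i : Fin n} {m1 m2 : M} {t1 t2 : ℕ} :
      t1 < t2 → e.broadcastsAt i m1 t1 → e.broadcastsAt i m2 t2 → e.MsgCausal m1 m2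
  | delivered {i : Fin n} {m1 m2 : M} {t1 t2 : ℕ} :
      t1 < t2 → e.deliversAt i m1 t1 → e.broadcastsAt i m2 t2 → e.MsgCausal m1 m2
  | trans {m1 m2 m3 : M} : e.MsgCausal m1 m2 → e.MsgCausal m2 m3 → e.MsgCausal m1 m3

/-- The delivery condition of the background task of `p_i` is enabled. -/
def Deliverable {n : ℕ} {M : Type} (G : SimpleGraph (Fin n)) (e : Execution n M G)
    (i : Fin n) (t : ℕ) : Prop :=
  ∃ tp : Tuple n M, inT2 G (e.cfg t) i tp

/-- Fairness assumptions of the model: channels are reliable (a protocol message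
in transit is eventually received) and the background task of each process is
eventually executed whenever it stays enabled. -/
structure Fair {n : ℕ} {M : Type} {G : SimpleGraph (Fin n)} (e : Execution n M G) : Prop where
  recvFair : ∀ t (i j : Fin n), (e.cfg t).chan j i ≠ [] →
    ∃ t', t ≤ t' ∧ (e.lbl t' = some (.recvToco i j) ∨ e.lbl t' = some (.recvCatchup i j))
  deliverFair : ∀ t (i : Fin n), (∀ t', t ≤ t' → Deliverable G e i t') →
    ∃ t', t ≤ t' ∧ ∃ tp : Tuple n M, e.lbl t' = some (.deliver i tp)

end Fisheye

namespace Fisheye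

/-- `p_i` sends, at time `t`, a protocol message (`TOCOBC` or `CATCH_UP`)
containing the clock value `v = total_i[i]`.  This happens either when `p_i`
toco-broadcasts (the attached `s_tot` is the freshly incremented `total_i[i]`),
or when `p_i` receives a `TOCOBC` message whose timestamp `s_tot` satisfies
`total_i[i] ≤ s_tot`, in which case it sends `CATCH_UP(total_i[i], i)` with the
caught-up value `total_i[i] = s_tot + 1`.  In both cases the sent value is the
value of `total_i[i]` in the configuration after the step. -/
def sendsClockAt {n : ℕ} {M : Type} {G : SimpleGraph (Fin n)}
    (e : Execution n M G) (i : Fin n) (v : ℕ) (t : ℕ) : Prop :=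
  ((∃ m : M, e.lbl t = some (.broadcast i m)) ∨
   (∃ (j : Fin n) (tp : Tuple n M) (rest : List (PMsg n M)),
      e.lbl t = some (.recvToco i j) ∧
      (e.cfg t).chan j i = PMsg.tocobc tp :: rest ∧
      ((e.cfg t).proc i).total i ≤ tp.stot)) ∧
  v = ((e.cfg (t + 1)).proc i).total i

/-- The "originating process" of a protocol message. -/
def msgSender {n : ℕ} {M : Type} : PMsg n M → Fin n
  | .tocobc tp => tp.sender
  | .catchup _ s => s

/-- Invariant: every protocol message in the channel from `p_j` to `p_i`
was originated by `p_j`, and `j ≠ i`. -/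
def ChanInv {n : ℕ} {M : Type} (c : Config n M) : Prop :=
  ∀ j i : Fin n, ∀ msg ∈ c.chan j i, msgSender msg = j ∧ j ≠ i

lemma chanInv_step {n : ℕ} {M : Type} {G : SimpleGraph (Fin n)}
    {c c' : Config n M} {l : Label n M}
    (h : Step G c l c') (hc : ChanInv c) : ChanInv c' := by
  cases h with
  | broadcast i m =>
      intro j b msg hm
      simp only at hm
      split at hm
      · rcases List.mem_append.1 hm with h1 | h1
        · exact hc _ _ _ h1
        · simp only [List.mem_singleton] at h1
          subst h1
          rename_i hcond
          exact ⟨hcond.1.symm, hcond.1 ▸ (Ne.symm hcond.2)⟩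
      · exact hc _ _ _ hm
  | recvToco i j tp rest hhead =>
      intro a b msg hm
      simp only at hm
      split at hm
      · rename_i hcond
        obtain ⟨ha, hb⟩ := hcond
        subst ha; subst hb
        exact hc _ _ _ (by rw [hhead]; exact List.mem_cons_of_mem _ hm)
      · split at hm
        · rcases List.mem_append.1 hm with h1 | h1
          · exact hc _ _ _ h1
          · simp only [List.mem_singleton] at h1
            subst h1
            rename_i hcond
            exact ⟨hcond.2.1.symm, hcond.2.1 ▸ (Ne.symm hcond.2.2)⟩
        · exact hc _ _ _ hm
  | recvCatchup i j d s rest hhead =>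
      intro a b msg hm
      simp only at hm
      split at hm
      · rename_i hcond
        obtain ⟨ha, hb⟩ := hcond
        subst ha; subst hb
        exact hc _ _ _ (by rw [hhead]; exact List.mem_cons_of_mem _ hm)
      · exact hc _ _ _ hm
  | deliver i tp hT2 hmin =>
      intro a b msg hm
      exact hc _ _ _ hm

lemma chanInv_all {n : ℕ} {M : Type} {G : SimpleGraph (Fin n)}
    (e : Execution n M G) : ∀ t, ChanInv (e.cfg t) := by
  intro t
  induction t with
  | zero =>
      rw [e.init]
      intro j i msg hm
      simp [initConfig] at hm
  | succ t ih =>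
      have hs := e.steps t
      cases hl : e.lbl t with
      | none => rw [hl] at hs; simp only [OptStep] at hs; rw [hs]; exact ih
      | some l => rw [hl] at hs; exact chanInv_step hs ih

lemma total_step_mono {n : ℕ} {M : Type} {G : SimpleGraph (Fin n)}
    {c c' : Config n M} {l : Label n M}
    (h : Step G c l c') (hc : ChanInv c) (i : Fin n) :
    (c.proc i).total i ≤ (c'.proc i).total i := by
  cases h with
  | broadcast j m =>
      by_cases hji : j = i
      · subst hji
        simp [Function.update_self]
      · simp [Function.update_of_ne (Ne.symm hji)]
  | recvToco i0 j tp rest hhead =>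
      by_cases hii : i0 = i
      · subst hii
        have hsend := hc j i0 (PMsg.tocobc tp) (by rw [hhead]; exact List.mem_cons_self)
        have hsj : tp.sender = j := hsend.1
        have hji : tp.sender ≠ i0 := by rw [hsj]; exact hsend.2
        simp only [Function.update_self]
        split
        · rename_i hle
          rw [Function.update_self]
          omega
        · rw [Function.update_of_ne (Ne.symm hji)]
      · simp [Function.update_of_ne (Ne.symm hii)]
  | recvCatchup i0 j d s rest hhead =>
      by_cases hii : i0 = i
      · subst hii
        have hsend := hc j i0 (PMsg.catchup d s) (by rw [hhead]; exact List.mem_cons_self)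
        have hs1 : s = j := hsend.1
        have hsj : s ≠ i0 := by rw [hs1]; exact hsend.2
        simp only [Function.update_self]
        rw [Function.update_of_ne (Ne.symm hsj)]
      · simp [Function.update_of_ne (Ne.symm hii)]
  | deliver i0 tp hT2 hmin =>
      by_cases hii : i0 = i
      · subst hii; simp [Function.update_self]
      · simp [Function.update_of_ne (Ne.symm hii)]

lemma total_mono {n : ℕ} {M : Type} {G : SimpleGraph (Fin n)}
    (e : Execution n M G) (i : Fin n) :
    ∀ t t' : ℕ, t ≤ t' → ((e.cfg t).proc i).total i ≤ ((e.cfg t').proc i).total i := by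
  intro t t' h
  induction t', h using Nat.le_induction with
  | base => exact le_rfl
  | succ t' ht ih =>
      refine le_trans ih ?_
      have hs := e.steps t'
      cases hl : e.lbl t' with
      | none => rw [hl] at hs; simp only [OptStep] at hs; rw [hs]
      | some l =>
          rw [hl] at hs
          exact total_step_mono hs (chanInv_all e t') i

lemma send_strict {n : ℕ} {M : Type} {G : SimpleGraph (Fin n)}
    (e : Execution n M G) (i : Fin n) (v t : ℕ)
    (h : sendsClockAt e i v t) :
    ((e.cfg t).proc i).total i < v := by
  obtain ⟨hcase, hv⟩ := h
  subst hv
  rcases hcase with ⟨m, hl⟩ | ⟨j, tp, rest, hl, hch, hle⟩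
  · have hs := e.steps t
    rw [hl] at hs
    simp only [OptStep] at hs
    generalize hC : e.cfg (t + 1) = c' at hs ⊢
    cases hs
    simp [Function.update_self]
  · have hs := e.steps t
    rw [hl] at hs
    simp only [OptStep] at hs
    generalize hC : e.cfg (t + 1) = c' at hs ⊢
    cases hs with
    | recvToco _ _ tp2 rest2 hhead2 =>
        rw [hch] at hhead2
        have htp : tp2 = tp := by
          injection hhead2 with h1 _
          injection h1 with h
          exact h.symm
        subst htp
        simp only [Function.update_self, if_pos hle, Function.update_self]
        omega

/-- **Lemma 2, Propositions 1 and 2.**  In any execution of Algorithm 1, the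
successive values of the scalar logical clock `total_i[i]` at each process
`p_i` are monotonically increasing, and the sequence of `total_i[i]` values
included in the successive `TOCOBC` and `CATCH_UP` messages sent out by `p_i`
is strictly increasing. -/
theorem total_ii_monotone_and_sent_strict {n : ℕ} {M : Type}
    {G : SimpleGraph (Fin n)} (e : Execution n M G) (i : Fin n) :
    (∀ t t' : ℕ, t ≤ t' → ((e.cfg t).proc i).total i ≤ ((e.cfg t').proc i).total i) ∧
    (∀ (t1 t2 : ℕ) (v1 v2 : ℕ), t1 < t2 →
      sendsClockAt e i v1 t1 → sendsClockAt e i v2 t2 → v1 < v2) := by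
  constructor
  · exact total_mono e i
  · intro t1 t2 v1 v2 hlt h1 h2
    have hv1 : v1 = ((e.cfg (t1 + 1)).proc i).total i := h1.2
    have hle : ((e.cfg (t1 + 1)).proc i).total i ≤ ((e.cfg t2).proc i).total i :=
      total_mono e i _ _ hlt
    have := send_strict e i v2 t2 h2
    omega

end Fisheye
end

section
/- (Lemma 2, Proposition 3) In any execution of Algorithm 1, for every process p_i and every process index j (including j ≠ i), the successive values taken by the vector total_i[·] at p_i are monotonically increasing with respect to the pointwise order; in particular, for j ≠ i, since channels are FIFO and reliable and the total_i[i] values sent by p_j in TOCOBC and CATCH_UP messages are strictly increasing, the successive values of total_i[j] are monotonically increasing. -/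
namespace Fisheye

/-- Value carried by a protocol message. -/
def pval {n : ℕ} {M : Type} : PMsg n M → ℕ
  | .tocobc tp => tp.stot
  | .catchup d _ => d

/-- Sender of a protocol message. -/
def psender {n : ℕ} {M : Type} : PMsg n M → Fin n
  | .tocobc tp => tp.sender
  | .catchup _ s => s

/-- `chainLE lo l hi`: the list `lo :: l` is strictly increasing and its last
element is `≤ hi`. -/
def chainLE : ℕ → List ℕ → ℕ → Prop
  | lo, [], hi => lo ≤ hi
  | lo, v :: rest, hi => lo < v ∧ chainLE v rest hi

lemma chainLE_le : ∀ {l : List ℕ} {lo hi : ℕ}, chainLE lo l hi → lo ≤ hi := by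
  intro l
  induction l with
  | nil => intro lo hi h; exact h
  | cons v rest ih => intro lo hi h; exact le_trans (le_of_lt h.1) (ih h.2)

lemma chainLE_append : ∀ {l : List ℕ} {lo hi v : ℕ},
    chainLE lo l hi → hi < v → chainLE lo (l ++ [v]) v := by
  intro l
  induction l with
  | nil => intro lo hi v h hv; exact ⟨lt_of_le_of_lt h hv, le_refl v⟩
  | cons w rest ih => intro lo hi v h hv; exact ⟨h.1, ih h.2 hv⟩

/-- The channel invariant of Algorithm 1. -/
def Inv {n : ℕ} {M : Type} (c : Config n M) : Prop :=
  (∀ i, c.chan i i = []) ∧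
  (∀ j i, ∀ msg ∈ c.chan j i, psender msg = j) ∧
  (∀ j i, j ≠ i →
    chainLE ((c.proc i).total j) ((c.chan j i).map pval) ((c.proc j).total j))

lemma step_inv {n : ℕ} {M : Type} {G : SimpleGraph (Fin n)} {c c' : Config n M}
    {l : Label n M} (hInv : Inv c) (hs : Step G c l c') :
    Inv c' ∧ ∀ a k, (c.proc a).total k ≤ (c'.proc a).total k := by
  obtain ⟨hempty, hsender, hchain⟩ := hInv
  cases hs with
  | broadcast i m =>
    refine ⟨⟨?_, ?_, ?_⟩, ?_⟩
    · intro a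
      simp only
      rw [if_neg]
      · exact hempty a
      · rintro ⟨rfl, h⟩; exact h rfl
    · intro j i' msg hmsg
      simp only at hmsg
      by_cases hc : j = i ∧ i' ≠ i
      · rw [if_pos hc] at hmsg
        rcases List.mem_append.1 hmsg with h | h
        · exact hsender j i' msg h
        · simp only [List.mem_singleton] at h
          subst h; simp [psender, hc.1]
      · rw [if_neg hc] at hmsg
        exact hsender j i' msg hmsg
    · intro j i' hji
      simp only
      by_cases hj : j = i
      · subst hj
        rw [if_pos ⟨rfl, Ne.symm hji⟩]
        have hlo : (Function.update c.proc j
            { causal := Function.update (c.proc j).causal j ((c.proc j).causal j + 1)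
              total := Function.update (c.proc j).total j ((c.proc j).total j + 1)
              pending := insert ⟨m, (c.proc j).causal, (c.proc j).total j + 1, j⟩
                           (c.proc j).pending } i').total j = (c.proc i').total j := by
          rw [Function.update_apply]
          rw [if_neg (Ne.symm hji)]
        rw [hlo, Function.update_self]
        simp only [Function.update_self, List.map_append, List.map_cons, List.map_nil]
        exact chainLE_append (hchain j i' hji) (Nat.lt_succ_self _)
      · rw [if_neg (by rintro ⟨rfl, _⟩; exact hj rfl)]
        have h1 : (Function.update c.proc i
            { causal := Function.update (c.proc i).causal i ((c.proc i).causal i + 1)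
              total := Function.update (c.proc i).total i ((c.proc i).total i + 1)
              pending := insert ⟨m, (c.proc i).causal, (c.proc i).total i + 1, i⟩
                           (c.proc i).pending } i').total j = (c.proc i').total j := by
          rw [Function.update_apply]
          split
          · next h => subst h; simp [Function.update_apply, hj]
          · rfl
        have h2 : (Function.update c.proc i
            { causal := Function.update (c.proc i).causal i ((c.proc i).causal i + 1)
              total := Function.update (c.proc i).total i ((c.proc i).total i + 1)
              pending := insert ⟨m, (c.proc i).causal, (c.proc i).total i + 1, i⟩
                           (c.proc i).pending } j).total j = (c.proc j).total j := by
          rw [Function.update_apply, if_neg hj]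
        rw [h1, h2]
        exact hchain j i' hji
    · intro a k
      simp only [Function.update_apply]
      split
      · next h =>
        subst h
        simp only [Function.update_apply]
        split
        · next h2 => subst h2; exact Nat.le_succ _
        · exact le_refl _
      · exact le_refl _
  | recvToco i j tp rest hhead =>
    have hji : j ≠ i := by
      intro h; subst h
      rw [hempty j] at hhead; cases hhead
    have hsend : tp.sender = j := by
      have := hsender j i (PMsg.tocobc tp) (by rw [hhead]; exact List.mem_cons_self)
      simpa [psender] using this
    have hch := hchain j i hji
    rw [hhead] at hch
    simp only [List.map_cons] at hch
    obtain ⟨hlo, hrest⟩ := hch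
    -- abbreviation for the new total of p_i
    set T : Fin n → ℕ :=
      (if (c.proc i).total i ≤ tp.stot then
          Function.update (Function.update (c.proc i).total tp.sender tp.stot) i
            (tp.stot + 1)
        else Function.update (c.proc i).total tp.sender tp.stot) with hT
    have hTj : T j = tp.stot := by
      rw [hT]
      split
      · rw [Function.update_apply, if_neg hji, ← hsend, Function.update_self]
      · rw [← hsend, Function.update_self]
    have hTi : T i = if (c.proc i).total i ≤ tp.stot then tp.stot + 1
        else (c.proc i).total i := by
      rw [hT]
      split
      · rw [Function.update_self]
      · rw [Function.update_apply, hsend, if_neg (Ne.symm hji)]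
    have hTk : ∀ k, k ≠ i → k ≠ j → T k = (c.proc i).total k := by
      intro k hki hkj
      rw [hT]
      split
      · rw [Function.update_apply, if_neg hki, Function.update_apply, hsend, if_neg hkj]
      · rw [Function.update_apply, hsend, if_neg hkj]
    have hTmono : ∀ k, (c.proc i).total k ≤ T k := by
      intro k
      by_cases hki : k = i
      · subst hki
        rw [hTi]
        split
        · next h => exact le_trans h (Nat.le_succ _)
        · exact le_refl _
      · by_cases hkj : k = j
        · subst hkj; rw [hTj]; exact le_of_lt hlo
        · rw [hTk k hki hkj]
    have hproc : ∀ a, (Function.update c.proc i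
        { causal := (c.proc i).causal
          total := T
          pending := insert tp (c.proc i).pending } a).total =
        if a = i then T else (c.proc a).total := by
      intro a
      rw [Function.update_apply]
      split <;> rfl
    refine ⟨⟨?_, ?_, ?_⟩, ?_⟩
    · intro a
      simp only
      rw [if_neg (by rintro ⟨rfl, rfl⟩; exact hji rfl),
          if_neg (by rintro ⟨_, rfl, h⟩; exact h rfl)]
      exact hempty a
    · intro a b msg hmsg
      simp only at hmsg
      by_cases h1 : a = j ∧ b = i
      · rw [if_pos h1] at hmsg
        refine hsender a b msg ?_
        rw [h1.1, h1.2, hhead]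
        exact List.mem_cons_of_mem _ hmsg
      · rw [if_neg h1] at hmsg
        by_cases h2 : (c.proc i).total i ≤ tp.stot ∧ a = i ∧ b ≠ i
        · rw [if_pos h2] at hmsg
          rcases List.mem_append.1 hmsg with h | h
          · exact hsender a b msg h
          · simp only [List.mem_singleton] at h
            subst h; simp [psender, h2.2.1]
        · rw [if_neg h2] at hmsg
          exact hsender a b msg hmsg
    · intro a b hab
      simp only [hproc]
      by_cases h1 : a = j ∧ b = i
      · obtain ⟨rfl, rfl⟩ := h1
        rw [if_pos (show a = a ∧ b = b from ⟨rfl, rfl⟩),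
            if_pos (show b = b from rfl), if_neg (show ¬ a = b from hab), hTj]
        exact hrest
      · rw [if_neg h1]
        by_cases h2 : (c.proc i).total i ≤ tp.stot ∧ a = i ∧ b ≠ i
        · obtain ⟨hle, rfl, hbi⟩ := h2
          rw [if_neg hbi,
              if_pos (show (c.proc a).total a ≤ tp.stot ∧ a = a ∧ b ≠ a from
                ⟨hle, rfl, hbi⟩),
              if_pos (show a = a from rfl), hTi, if_pos hle]
          simp only [List.map_append, List.map_cons, List.map_nil, pval]
          exact chainLE_append (hchain a b hab) (Nat.lt_succ_of_le hle)
        · rw [if_neg h2]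
          by_cases hbi : b = i
          · subst hbi
            have haj : a ≠ j := fun h => h1 ⟨h, rfl⟩
            rw [if_pos (show b = b from rfl), if_neg hab, hTk a hab haj]
            exact hchain a b hab
          · by_cases hai : a = i
            · subst hai
              have hnle : ¬ (c.proc a).total a ≤ tp.stot := fun h => h2 ⟨h, rfl, hbi⟩
              rw [if_neg hbi, if_pos (show a = a from rfl), hTi, if_neg hnle]
              exact hchain a b hab
            · rw [if_neg hbi, if_neg hai]
              exact hchain a b hab
    · intro a k
      rw [hproc]
      split
      · next h => subst h; exact hTmono k
      · exact le_refl _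
  | recvCatchup i j d s rest hhead =>
    have hji : j ≠ i := by
      intro h; subst h
      rw [hempty j] at hhead; cases hhead
    have hsend : s = j := by
      have := hsender j i (PMsg.catchup d s) (by rw [hhead]; exact List.mem_cons_self)
      simpa [psender] using this
    subst hsend
    have hch := hchain s i hji
    rw [hhead] at hch
    simp only [List.map_cons, pval] at hch
    obtain ⟨hlo, hrest⟩ := hch
    have hproc : ∀ a, (Function.update c.proc i
        { causal := (c.proc i).causal
          total := Function.update (c.proc i).total s d
          pending := (c.proc i).pending } a).total =
        if a = i then Function.update (c.proc i).total s d else (c.proc a).total := by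
      intro a
      rw [Function.update_apply]
      split <;> rfl
    refine ⟨⟨?_, ?_, ?_⟩, ?_⟩
    · intro a
      simp only
      rw [if_neg (by rintro ⟨rfl, rfl⟩; exact hji rfl)]
      exact hempty a
    · intro a b msg hmsg
      simp only at hmsg
      by_cases h1 : a = s ∧ b = i
      · rw [if_pos h1] at hmsg
        refine hsender a b msg ?_
        rw [h1.1, h1.2, hhead]
        exact List.mem_cons_of_mem _ hmsg
      · rw [if_neg h1] at hmsg
        exact hsender a b msg hmsg
    · intro a b hab
      simp only [hproc]
      by_cases h1 : a = s ∧ b = i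
      · obtain ⟨rfl, rfl⟩ := h1
        rw [if_pos (show a = a ∧ b = b from ⟨rfl, rfl⟩),
            if_pos (show b = b from rfl), if_neg (show ¬ a = b from hab),
            Function.update_self]
        exact hrest
      · rw [if_neg h1]
        by_cases hbi : b = i
        · subst hbi
          have has : a ≠ s := fun h => h1 ⟨h, rfl⟩
          rw [if_pos (show b = b from rfl), if_neg (show ¬ a = b from hab),
              Function.update_apply, if_neg has]
          exact hchain a b hab
        · by_cases hai : a = i
          · subst hai
            rw [if_neg hbi, if_pos (show a = a from rfl), Function.update_apply,
                if_neg (fun h => hji h.symm)]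
            exact hchain a b hab
          · rw [if_neg hbi, if_neg hai]
            exact hchain a b hab
    · intro a k
      rw [hproc]
      split
      · next h =>
        subst h
        rw [Function.update_apply]
        split
        · next h2 => subst h2; exact le_of_lt hlo
        · exact le_refl _
      · exact le_refl _
  | deliver i tp hT2 hmin =>
    have hproc : ∀ a, (Function.update c.proc i
        { causal :=
            if tp.sender = i then (c.proc i).causal
            else Function.update (c.proc i).causal tp.sender
                   ((c.proc i).causal tp.sender + 1)
          total := (c.proc i).total
          pending := (c.proc i).pending \ {tp} } a).total = (c.proc a).total := by
      intro a
      rw [Function.update_apply]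
      split
      · next h => subst h; rfl
      · rfl
    refine ⟨⟨hempty, hsender, ?_⟩, ?_⟩
    · intro a b hab
      simp only [hproc]
      exact hchain a b hab
    · intro a k
      rw [hproc]

lemma exec_inv {n : ℕ} {M : Type} {G : SimpleGraph (Fin n)} (e : Execution n M G)
    (t : ℕ) : Inv (e.cfg t) := by
  induction t with
  | zero =>
    rw [e.init]
    refine ⟨fun _ => rfl, fun _ _ _ h => absurd h List.not_mem_nil, ?_⟩
    intro j i hji
    simp only [initConfig, List.map_nil]
    exact le_refl 0
  | succ t ih =>
    have hs := e.steps t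
    cases hl : e.lbl t with
    | none => rw [hl] at hs; unfold OptStep at hs; rw [hs]; exact ih
    | some l => rw [hl] at hs; exact (step_inv ih hs).1

/-- **Lemma 2, Proposition 3.**  In any execution of Algorithm 1, for every
process `p_i` and every process index `j` (including `j ≠ i`), the successive
values taken by the vector `total_i[·]` at `p_i` are monotonically increasing
with respect to the pointwise order. -/
theorem total_vector_monotone {n : ℕ} {M : Type} {G : SimpleGraph (Fin n)}
    (e : Execution n M G) (i : Fin n) :
    ∀ t t' : ℕ, t ≤ t' → ∀ j : Fin n,
      ((e.cfg t).proc i).total j ≤ ((e.cfg t').proc i).total j := by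
  intro t t' htt' j
  induction t' with
  | zero =>
    have : t = 0 := Nat.le_zero.1 htt'
    subst this; exact le_refl _
  | succ t' ih =>
    rcases Nat.lt_or_ge t (t' + 1) with h | h
    · have h1 : t ≤ t' := Nat.lt_succ_iff.1 h
      refine le_trans (ih h1) ?_
      have hs := e.steps t'
      cases hl : e.lbl t' with
      | none => rw [hl] at hs; unfold OptStep at hs; rw [hs]
      | some l =>
        rw [hl] at hs
        exact (step_inv (exec_inv e t') hs).2 i j
    · have : t = t' + 1 := le_antisymm htt' h
      subst this; exact le_refl _

end Fisheye
end

section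
/- (Lemma 3) In any execution of Algorithm 1, the following invariant holds: for any two distinct processes p_i ≠ p_j and any message m toco-broadcast by p_j with attached causal vector s_caus_j^m[·], at every point of p_i's execution outside the delivery step (i.e., outside the instant between toco-delivering a message and the subsequent increment of causal_i), one has s_caus_j^m[j] < causal_i[j] if and only if p_i has already toco-delivered m. -/
namespace Fisheye
variable {n : ℕ} {M : Type} {G : SimpleGraph (Fin n)}

/-- `tp` was created by a broadcast step at time `tb`. -/
def Origin (e : Execution n M G) (tp : Tuple n M) (tb : ℕ) : Prop :=
  e.lbl tb = some (.broadcast tp.sender tp.msg) ∧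
  tp.scaus = ((e.cfg tb).proc tp.sender).causal ∧
  tp.stot = ((e.cfg tb).proc tp.sender).total tp.sender + 1

/-- `tp` is somewhere in the system at time `t`. -/
def InSys (e : Execution n M G) (t : ℕ) (tp : Tuple n M) : Prop :=
  (∃ p, tp ∈ ((e.cfg t).proc p).pending) ∨ (∃ a b, PMsg.tocobc tp ∈ (e.cfg t).chan a b)

/-- `p_i` has toco-delivered the tuple `tp` strictly before time `t`. -/
def Delivered (e : Execution n M G) (i : Fin n) (tp : Tuple n M) (t : ℕ) : Prop :=
  ∃ t', t' < t ∧ e.lbl t' = some (.deliver i tp)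

lemma step_of_lbl (e : Execution n M G) {t : ℕ} {l : Label n M} (h : e.lbl t = some l) :
    Step G (e.cfg t) l (e.cfg (t + 1)) := by
  have hs := e.steps t; rw [h] at hs; exact hs

lemma cfg_of_none (e : Execution n M G) {t : ℕ} (h : e.lbl t = none) :
    e.cfg (t + 1) = e.cfg t := by
  have hs := e.steps t; rw [h] at hs; exact hs

lemma delivered_succ (e : Execution n M G) (i : Fin n) (tp : Tuple n M) (t : ℕ) :
    Delivered e i tp (t + 1) ↔ Delivered e i tp t ∨ e.lbl t = some (.deliver i tp) := by
  constructor
  · rintro ⟨t', ht', hl⟩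
    rcases Nat.lt_succ_iff_lt_or_eq.1 ht' with h | rfl
    · exact Or.inl ⟨t', h, hl⟩
    · exact Or.inr hl
  · rintro (⟨t', ht', hl⟩ | hl)
    · exact ⟨t', Nat.lt_succ_of_lt ht', hl⟩
    · exact ⟨t, Nat.lt_succ_self t, hl⟩

lemma pending_of_deliver (e : Execution n M G) {t : ℕ} {p : Fin n} {tp : Tuple n M}
    (h : e.lbl t = some (.deliver p tp)) : tp ∈ ((e.cfg t).proc p).pending := by
  have hs := step_of_lbl e h
  generalize hc : e.cfg (t + 1) = c' at hs
  cases hs with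
  | deliver i tp hT2 hmin => exact hT2.1.1.1

lemma scaus_le_of_deliver (e : Execution n M G) {t : ℕ} {p : Fin n} {tp : Tuple n M}
    (h : e.lbl t = some (.deliver p tp)) : ∀ k, tp.scaus k ≤ ((e.cfg t).proc p).causal k := by
  have hs := step_of_lbl e h
  generalize hc : e.cfg (t + 1) = c' at hs
  cases hs with
  | deliver i tp hT2 hmin => exact hT2.1.1.2

lemma causal_le_succ (e : Execution n M G) (t : ℕ) (p k : Fin n) :
    ((e.cfg t).proc p).causal k ≤ ((e.cfg (t+1)).proc p).causal k := by
  cases hl : e.lbl t with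
  | none => rw [cfg_of_none e hl]
  | some l =>
    have hs := step_of_lbl e hl
    generalize hc : e.cfg (t+1) = c' at hs
    cases hs with
    | broadcast i m =>
      simp only [Function.update_apply, apply_ite]
      split_ifs <;> (try simp only [Function.update_apply]) <;> (try split_ifs) <;>
        subst_vars <;> omega
    | recvToco i j tp rest hh =>
      dsimp only; simp only [Function.update_apply]; split_ifs <;> simp_all
    | recvCatchup i j d s rest hh =>
      dsimp only; simp only [Function.update_apply]; split_ifs <;> simp_all
    | deliver i tp h1 h2 =>
      simp only [Function.update_apply, apply_ite]
      split_ifs <;> (try simp only [Function.update_apply]) <;> (try split_ifs) <;>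
        subst_vars <;> omega

lemma causal_mono (e : Execution n M G) (p k : Fin n) {s t : ℕ} (h : s ≤ t) :
    ((e.cfg s).proc p).causal k ≤ ((e.cfg t).proc p).causal k := by
  induction h with
  | refl => exact le_rfl
  | step h ih => exact le_trans ih (causal_le_succ e _ p k)

lemma causal_bcast (e : Execution n M G) {t : ℕ} {j : Fin n} {m : M}
    (hl : e.lbl t = some (.broadcast j m)) :
    ((e.cfg (t+1)).proc j).causal j = ((e.cfg t).proc j).causal j + 1 := by
  have hs := step_of_lbl e hl
  generalize hc : e.cfg (t+1) = c' at hs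
  cases hs with
  | broadcast i m => simp [Function.update_apply]

/-- causal of a non-delivering and non-self-broadcasting process is unchanged. -/
lemma origin_scaus_lt (e : Execution n M G) {tp : Tuple n M} {tb t : ℕ}
    (hOr : Origin e tp tb) (h : tb < t) :
    tp.scaus tp.sender < ((e.cfg t).proc tp.sender).causal tp.sender := by
  have h1 := causal_bcast e hOr.1
  have h2 := causal_mono e tp.sender tp.sender (show tb + 1 ≤ t from h)
  rw [hOr.2.1]; omega

lemma origin_unique (e : Execution n M G) {tp tp' : Tuple n M} {tb tb' : ℕ}
    (h : Origin e tp tb) (h' : Origin e tp' tb') (hm : tp.msg = tp'.msg) :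
    tb = tb' ∧ tp = tp' := by
  have heq := e.uniqueBcast tp.msg tp.sender tp'.sender tb tb' h.1 (by rw [hm]; exact h'.1)
  subst heq
  have hlab := h.1.symm.trans h'.1
  have hlab' := Option.some.inj hlab
  obtain ⟨hsend, -⟩ := Label.broadcast.inj hlab'
  refine ⟨rfl, ?_⟩
  obtain ⟨m1, s1, st1, sd1⟩ := tp
  obtain ⟨m2, s2, st2, sd2⟩ := tp'
  simp only at hsend hm
  subst hsend; subst hm
  simp only [Tuple.mk.injEq, and_true, true_and]
  exact ⟨h.2.1.trans h'.2.1.symm, h.2.2.trans h'.2.2.symm⟩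

end Fisheye

namespace Fisheye
variable {n : ℕ} {M : Type} {G : SimpleGraph (Fin n)}

/-- The global invariant of Algorithm 1. -/
local infixl:50 " ∈+ " => List.Duplicate

structure GInv (e : Execution n M G) (t : ℕ) : Prop where
  orig : ∀ tp, InSys e t tp → ∃ tb, tb < t ∧ Origin e tp tb
  odel : ∀ (p : Fin n) (tp : Tuple n M) (t' : ℕ), t' < t →
    e.lbl t' = some (.deliver p tp) → ∃ tb, tb < t' ∧ Origin e tp tb
  pd : ∀ (i : Fin n) (tp : Tuple n M), Delivered e i tp t → tp ∉ ((e.cfg t).proc i).pending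
  dc : ∀ (i : Fin n) (tp : Tuple n M), Delivered e i tp t →
    ∀ a, PMsg.tocobc tp ∉ (e.cfg t).chan a i
  so : ∀ (a b : Fin n) (tp : Tuple n M), PMsg.tocobc tp ∈ (e.cfg t).chan a b → a = tp.sender
  pc : ∀ (i : Fin n) (tp : Tuple n M), tp ∈ ((e.cfg t).proc i).pending →
    ∀ a, PMsg.tocobc tp ∉ (e.cfg t).chan a i
  once : ∀ (a b : Fin n) (tp : Tuple n M), ¬ (PMsg.tocobc tp) ∈+ (e.cfg t).chan a b

lemma dup_append_singleton {α : Type*} {x y : α} {l : List α} (h : x ∈+ l ++ [y]) :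
    x ∈+ l ∨ (x ∈ l ∧ x = y) := by
  induction l with
  | nil => simp only [List.nil_append] at h; exact absurd h (List.not_duplicate_singleton x y)
  | cons a l ih =>
    rw [List.cons_append, List.duplicate_cons_iff] at h
    rcases h with ⟨rfl, hm⟩ | h
    · rcases List.mem_append.1 hm with h | h
      · exact Or.inl (List.Mem.duplicate_cons_self h)
      · simp only [List.mem_singleton] at h
        exact Or.inr ⟨List.mem_cons_self, h⟩
    · rcases ih h with h | ⟨h1, h2⟩
      · exact Or.inl (h.duplicate_cons a)
      · exact Or.inr ⟨List.mem_cons_of_mem a h1, h2⟩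

/-- Freshness of a just-broadcast tuple. -/
lemma fresh (e : Execution n M G) {t : ℕ} (inv : GInv e t) {i : Fin n} {m : M}
    (hl : e.lbl t = some (.broadcast i m)) :
    ¬ InSys e t ⟨m, ((e.cfg t).proc i).causal, ((e.cfg t).proc i).total i + 1, i⟩ ∧
    ∀ p, ¬ Delivered e p ⟨m, ((e.cfg t).proc i).causal, ((e.cfg t).proc i).total i + 1, i⟩ t := by
  set tp : Tuple n M := ⟨m, ((e.cfg t).proc i).causal, ((e.cfg t).proc i).total i + 1, i⟩ with htp
  have key : ∀ tb, tb < t → ¬ Origin e tp tb := by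
    intro tb htb hOr
    have := origin_scaus_lt e hOr htb
    simp only [htp] at this
    exact lt_irrefl _ this
  constructor
  · intro hin
    obtain ⟨tb, htb, hOr⟩ := inv.orig tp hin
    exact key tb htb hOr
  · intro p ⟨t', ht', hdl⟩
    obtain ⟨tb, htb, hOr⟩ := inv.odel p tp t' ht' hdl
    exact key tb (lt_trans htb ht') hOr

end Fisheye

namespace Fisheye
variable {n : ℕ} {M : Type} {G : SimpleGraph (Fin n)}
local infixl:50 " ∈+ " => List.Duplicate

lemma ginv_zero (e : Execution n M G) : GInv e 0 := by
  have h := e.init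
  constructor
  · intro tp hin
    rcases hin with ⟨p, hp⟩ | ⟨a, b, hab⟩
    · rw [h] at hp; exact absurd hp (Set.notMem_empty _)
    · rw [h] at hab; exact absurd hab List.not_mem_nil
  · intro p tp t' ht'; omega
  · rintro i tp ⟨t', ht', -⟩; omega
  · rintro i tp ⟨t', ht', -⟩; omega
  · intro a b tp hab; rw [h] at hab; exact absurd hab List.not_mem_nil
  · intro i tp hp; rw [h] at hp; exact absurd hp (Set.notMem_empty _)
  · intro a b tp; rw [h]; exact List.not_duplicate_nil _

lemma ginv_succ (e : Execution n M G) {t : ℕ} (inv : GInv e t) : GInv e (t + 1) := by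
  cases hl : e.lbl t with
  | none =>
    have hc := cfg_of_none e hl
    refine ⟨?_, ?_, ?_, ?_, ?_, ?_, ?_⟩
    · intro tp hin
      have hin' : InSys e t tp := by unfold InSys at hin ⊢; rw [hc] at hin; exact hin
      obtain ⟨tb, htb, hOr⟩ := inv.orig tp hin'
      exact ⟨tb, Nat.lt_succ_of_lt htb, hOr⟩
    · intro p tp t' ht' hdl
      rcases Nat.lt_succ_iff_lt_or_eq.1 ht' with h | rfl
      · exact inv.odel p tp t' h hdl
      · rw [hl] at hdl; cases hdl
    · intro i tp hD
      rcases (delivered_succ e i tp t).1 hD with hD | hbad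
      · rw [hc]; exact inv.pd i tp hD
      · rw [hl] at hbad; cases hbad
    · intro i tp hD a
      rcases (delivered_succ e i tp t).1 hD with hD | hbad
      · rw [hc]; exact inv.dc i tp hD a
      · rw [hl] at hbad; cases hbad
    · intro a b tp hab; rw [hc] at hab; exact inv.so a b tp hab
    · intro i tp hp a; rw [hc] at hp ⊢; exact inv.pc i tp hp a
    · intro a b tp; rw [hc]; exact inv.once a b tp
  | some l =>
    have hs := step_of_lbl e hl
    generalize hcg : e.cfg (t + 1) = c' at hs
    cases hs with
    | broadcast i0 m0 =>
      set newTp : Tuple n M :=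
        ⟨m0, ((e.cfg t).proc i0).causal, ((e.cfg t).proc i0).total i0 + 1, i0⟩ with hnew
      have hfr := fresh e inv hl
      have hpend : ∀ p, ((e.cfg (t+1)).proc p).pending =
          if p = i0 then insert newTp ((e.cfg t).proc i0).pending
          else ((e.cfg t).proc p).pending := by
        intro p; rw [hcg]; by_cases h : p = i0 <;> simp [Function.update_apply, h]
      have hchan : ∀ a b, (e.cfg (t+1)).chan a b =
          if a = i0 ∧ b ≠ i0 then (e.cfg t).chan a b ++ [PMsg.tocobc newTp]
          else (e.cfg t).chan a b := by
        intro a b; rw [hcg]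
      have hOrNew : Origin e newTp t := by
        refine ⟨?_, rfl, rfl⟩
        rw [hl]
      refine ⟨?_, ?_, ?_, ?_, ?_, ?_, ?_⟩
      · -- orig
        intro tp hin
        have : tp = newTp ∨ InSys e t tp := by
          rcases hin with ⟨p, hp⟩ | ⟨a, b, hab⟩
          · rw [hpend p] at hp
            split_ifs at hp with h
            · rcases hp with rfl | hp
              · exact Or.inl rfl
              · exact Or.inr (Or.inl ⟨i0, hp⟩)
            · exact Or.inr (Or.inl ⟨p, hp⟩)
          · rw [hchan a b] at hab
            split_ifs at hab with h
            · rcases List.mem_append.1 hab with hab | hab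
              · exact Or.inr (Or.inr ⟨a, b, hab⟩)
              · simp only [List.mem_singleton, PMsg.tocobc.injEq] at hab
                exact Or.inl hab
            · exact Or.inr (Or.inr ⟨a, b, hab⟩)
        rcases this with rfl | hin'
        · exact ⟨t, Nat.lt_succ_self t, hOrNew⟩
        · obtain ⟨tb, htb, hOr⟩ := inv.orig tp hin'
          exact ⟨tb, Nat.lt_succ_of_lt htb, hOr⟩
      · -- odel
        intro p tp t' ht' hdl
        rcases Nat.lt_succ_iff_lt_or_eq.1 ht' with h | rfl
        · exact inv.odel p tp t' h hdl
        · rw [hl] at hdl; simp at hdl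
      · -- pd
        intro i' tp hD
        rcases (delivered_succ e i' tp t).1 hD with hD | hbad
        · rw [hpend i']
          split_ifs with h
          · subst h
            intro hmem
            rcases hmem with rfl | hmem
            · exact hfr.2 i' hD
            · exact inv.pd i' tp hD hmem
          · exact inv.pd i' tp hD
        · rw [hl] at hbad; simp at hbad
      · -- dc
        intro i' tp hD a
        rcases (delivered_succ e i' tp t).1 hD with hD | hbad
        · rw [hchan a i']
          split_ifs with h
          · intro hmem
            rcases List.mem_append.1 hmem with hmem | hmem
            · exact inv.dc i' tp hD a hmem
            · simp only [List.mem_singleton, PMsg.tocobc.injEq] at hmem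
              subst hmem
              exact hfr.2 i' hD
          · exact inv.dc i' tp hD a
        · rw [hl] at hbad; simp at hbad
      · -- so
        intro a b tp hab
        rw [hchan a b] at hab
        split_ifs at hab with h
        · rcases List.mem_append.1 hab with hab | hab
          · exact inv.so a b tp hab
          · simp only [List.mem_singleton, PMsg.tocobc.injEq] at hab
            subst hab; exact h.1
        · exact inv.so a b tp hab
      · -- pc
        intro i' tp hp a
        rw [hpend i'] at hp
        rw [hchan a i']
        split_ifs at hp with h
        · subst h
          rcases hp with rfl | hp
          · -- tp = newTp
            split_ifs with h2
            · exact absurd rfl h2.2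
            · intro hmem
              exact hfr.1 (Or.inr ⟨a, i', hmem⟩)
          · split_ifs with h2
            · intro hmem
              rcases List.mem_append.1 hmem with hmem | hmem
              · exact inv.pc i' tp hp a hmem
              · simp only [List.mem_singleton, PMsg.tocobc.injEq] at hmem
                subst hmem
                exact hfr.1 (Or.inl ⟨i', hp⟩)
            · exact inv.pc i' tp hp a
        · split_ifs with h2
          · intro hmem
            rcases List.mem_append.1 hmem with hmem | hmem
            · exact inv.pc i' tp hp a hmem
            · simp only [List.mem_singleton, PMsg.tocobc.injEq] at hmem
              subst hmem
              exact hfr.1 (Or.inl ⟨i', hp⟩)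
          · exact inv.pc i' tp hp a
      · -- once
        intro a b tp
        rw [hchan a b]
        split_ifs with h
        · intro hdup
          rcases dup_append_singleton hdup with hdup | ⟨hmem, heq⟩
          · exact inv.once a b tp hdup
          · simp only [PMsg.tocobc.injEq] at heq
            subst heq
            exact hfr.1 (Or.inr ⟨a, b, hmem⟩)
        · exact inv.once a b tp
    | recvToco i0 j0 tp0 rest hh =>
      have hpend : ∀ p, ((e.cfg (t+1)).proc p).pending =
          if p = i0 then insert tp0 ((e.cfg t).proc i0).pending
          else ((e.cfg t).proc p).pending := by
        intro p; rw [hcg]; by_cases h : p = i0 <;> simp [Function.update_apply, h]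
      have htoc : ∀ a b (tq : Tuple n M), PMsg.tocobc tq ∈ (e.cfg (t+1)).chan a b →
          PMsg.tocobc tq ∈ (e.cfg t).chan a b := by
        intro a b tq hm
        rw [hcg] at hm
        dsimp only at hm
        split_ifs at hm with h1 h2
        · obtain ⟨rfl, rfl⟩ := h1
          rw [hh]; exact List.mem_cons_of_mem _ hm
        · rcases List.mem_append.1 hm with hm | hm
          · exact hm
          · simp at hm
        · exact hm
      have hdupt : ∀ a b (tq : Tuple n M), (PMsg.tocobc tq) ∈+ (e.cfg (t+1)).chan a b →
          (PMsg.tocobc tq) ∈+ (e.cfg t).chan a b := by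
        intro a b tq hm
        rw [hcg] at hm
        dsimp only at hm
        split_ifs at hm with h1 h2
        · obtain ⟨rfl, rfl⟩ := h1
          rw [hh]; exact hm.duplicate_cons _
        · rcases dup_append_singleton hm with hm | ⟨hmem, heq⟩
          · exact hm
          · simp at heq
        · exact hm
      have htp0 : PMsg.tocobc tp0 ∈ (e.cfg t).chan j0 i0 := by
        rw [hh]; exact List.mem_cons_self
      refine ⟨?_, ?_, ?_, ?_, ?_, ?_, ?_⟩
      · -- orig
        intro tp hin
        have hin' : InSys e t tp := by
          rcases hin with ⟨p, hp⟩ | ⟨a, b, hab⟩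
          · rw [hpend p] at hp
            split_ifs at hp with h
            · rcases hp with rfl | hp
              · exact Or.inr ⟨j0, i0, htp0⟩
              · exact Or.inl ⟨i0, hp⟩
            · exact Or.inl ⟨p, hp⟩
          · exact Or.inr ⟨a, b, htoc a b tp hab⟩
        obtain ⟨tb, htb, hOr⟩ := inv.orig tp hin'
        exact ⟨tb, Nat.lt_succ_of_lt htb, hOr⟩
      · -- odel
        intro p tp t' ht' hdl
        rcases Nat.lt_succ_iff_lt_or_eq.1 ht' with h | rfl
        · exact inv.odel p tp t' h hdl
        · rw [hl] at hdl; simp at hdl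
      · -- pd
        intro i' tp hD
        rcases (delivered_succ e i' tp t).1 hD with hD | hbad
        · rw [hpend i']
          split_ifs with h
          · subst h
            intro hmem
            rcases hmem with rfl | hmem
            · exact inv.dc i' tp hD j0 htp0
            · exact inv.pd i' tp hD hmem
          · exact inv.pd i' tp hD
        · rw [hl] at hbad; simp at hbad
      · -- dc
        intro i' tp hD a
        rcases (delivered_succ e i' tp t).1 hD with hD | hbad
        · intro hmem
          exact inv.dc i' tp hD a (htoc a i' tp hmem)
        · rw [hl] at hbad; simp at hbad
      · -- so
        intro a b tp hab
        exact inv.so a b tp (htoc a b tp hab)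
      · -- pc
        intro i' tp hp a
        rw [hpend i'] at hp
        split_ifs at hp with h
        · rcases hp with heq | hp
          · intro hmem
            have hma : PMsg.tocobc tp ∈ (e.cfg t).chan a i' := htoc a i' tp hmem
            have haj : a = j0 := by
              have h1 := inv.so a i' tp hma
              have h2 := inv.so j0 i0 tp0 htp0
              rw [h1, heq, ← h2]
            have hmem' : PMsg.tocobc tp ∈ rest := by
              rw [hcg] at hmem
              dsimp only at hmem
              rw [if_pos ⟨haj, h⟩] at hmem
              exact hmem
            have hd : (PMsg.tocobc tp0) ∈+ (e.cfg t).chan j0 i0 := by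
              rw [hh]
              refine List.Mem.duplicate_cons_self ?_
              rw [← heq]; exact hmem'
            exact inv.once j0 i0 tp0 hd
          · intro hmem
            exact inv.pc i0 tp (h ▸ hp) a (h ▸ htoc a i' tp hmem)
        · intro hmem
          exact inv.pc i' tp hp a (htoc a i' tp hmem)
      · -- once
        intro a b tp hdup
        exact inv.once a b tp (hdupt a b tp hdup)

    | recvCatchup i0 j0 d0 s0 rest hh =>
      have hpend : ∀ p, ((e.cfg (t+1)).proc p).pending = ((e.cfg t).proc p).pending := by
        intro p; rw [hcg]; by_cases h : p = i0 <;> simp [Function.update_apply, h]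
      have htoc : ∀ a b (tq : Tuple n M), PMsg.tocobc tq ∈ (e.cfg (t+1)).chan a b →
          PMsg.tocobc tq ∈ (e.cfg t).chan a b := by
        intro a b tq hm
        rw [hcg] at hm
        dsimp only at hm
        split_ifs at hm with h1
        · obtain ⟨rfl, rfl⟩ := h1
          rw [hh]; exact List.mem_cons_of_mem _ hm
        · exact hm
      have hdupt : ∀ a b (tq : Tuple n M), (PMsg.tocobc tq) ∈+ (e.cfg (t+1)).chan a b →
          (PMsg.tocobc tq) ∈+ (e.cfg t).chan a b := by
        intro a b tq hm
        rw [hcg] at hm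
        dsimp only at hm
        split_ifs at hm with h1
        · obtain ⟨rfl, rfl⟩ := h1
          rw [hh]; exact hm.duplicate_cons _
        · exact hm
      refine ⟨?_, ?_, ?_, ?_, ?_, ?_, ?_⟩
      · intro tp hin
        have hin' : InSys e t tp := by
          rcases hin with ⟨p, hp⟩ | ⟨a, b, hab⟩
          · rw [hpend p] at hp; exact Or.inl ⟨p, hp⟩
          · exact Or.inr ⟨a, b, htoc a b tp hab⟩
        obtain ⟨tb, htb, hOr⟩ := inv.orig tp hin'
        exact ⟨tb, Nat.lt_succ_of_lt htb, hOr⟩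
      · intro p tp t' ht' hdl
        rcases Nat.lt_succ_iff_lt_or_eq.1 ht' with h | rfl
        · exact inv.odel p tp t' h hdl
        · rw [hl] at hdl; simp at hdl
      · intro i' tp hD
        rcases (delivered_succ e i' tp t).1 hD with hD | hbad
        · rw [hpend i']; exact inv.pd i' tp hD
        · rw [hl] at hbad; simp at hbad
      · intro i' tp hD a
        rcases (delivered_succ e i' tp t).1 hD with hD | hbad
        · exact fun hmem => inv.dc i' tp hD a (htoc a i' tp hmem)
        · rw [hl] at hbad; simp at hbad
      · intro a b tp hab
        exact inv.so a b tp (htoc a b tp hab)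
      · intro i' tp hp a
        rw [hpend i'] at hp
        exact fun hmem => inv.pc i' tp hp a (htoc a i' tp hmem)
      · intro a b tp hdup
        exact inv.once a b tp (hdupt a b tp hdup)
    | deliver i0 tp0 hT2 hmin =>
      have hpend : ∀ p, ((e.cfg (t+1)).proc p).pending =
          if p = i0 then ((e.cfg t).proc i0).pending \ {tp0}
          else ((e.cfg t).proc p).pending := by
        intro p; rw [hcg]; by_cases h : p = i0 <;> simp [Function.update_apply, h]
      have hchan : ∀ a b, (e.cfg (t+1)).chan a b = (e.cfg t).chan a b := by
        intro a b; rw [hcg]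
      have hp0 : tp0 ∈ ((e.cfg t).proc i0).pending := hT2.1.1.1
      refine ⟨?_, ?_, ?_, ?_, ?_, ?_, ?_⟩
      · intro tp hin
        have hin' : InSys e t tp := by
          rcases hin with ⟨p, hp⟩ | ⟨a, b, hab⟩
          · rw [hpend p] at hp
            split_ifs at hp with h
            · exact Or.inl ⟨i0, hp.1⟩
            · exact Or.inl ⟨p, hp⟩
          · rw [hchan a b] at hab; exact Or.inr ⟨a, b, hab⟩
        obtain ⟨tb, htb, hOr⟩ := inv.orig tp hin'
        exact ⟨tb, Nat.lt_succ_of_lt htb, hOr⟩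
      · intro p tp t' ht' hdl
        rcases Nat.lt_succ_iff_lt_or_eq.1 ht' with h | rfl
        · exact inv.odel p tp t' h hdl
        · rw [hl] at hdl
          have hinj := Option.some.inj hdl
          obtain ⟨rfl, rfl⟩ := Label.deliver.inj hinj
          exact inv.orig tp0 (Or.inl ⟨i0, hp0⟩)
      · intro i' tp hD
        rcases (delivered_succ e i' tp t).1 hD with hD | hbad
        · rw [hpend i']
          split_ifs with h
          · subst h
            intro hmem
            exact inv.pd _ tp hD hmem.1
          · exact inv.pd i' tp hD
        · rw [hl] at hbad
          have hinj := Option.some.inj hbad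
          obtain ⟨rfl, rfl⟩ := Label.deliver.inj hinj
          rw [hpend i0]
          simp
      · intro i' tp hD a
        rw [hchan a i']
        rcases (delivered_succ e i' tp t).1 hD with hD | hbad
        · exact inv.dc i' tp hD a
        · rw [hl] at hbad
          have hinj := Option.some.inj hbad
          obtain ⟨rfl, rfl⟩ := Label.deliver.inj hinj
          exact inv.pc i0 tp0 hp0 a
      · intro a b tp hab
        rw [hchan a b] at hab
        exact inv.so a b tp hab
      · intro i' tp hp a
        rw [hchan a i']
        rw [hpend i'] at hp
        split_ifs at hp with h
        · subst h
          exact inv.pc _ tp hp.1 a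
        · exact inv.pc i' tp hp a
      · intro a b tp
        rw [hchan a b]
        exact inv.once a b tp

end Fisheye

namespace Fisheye
variable {n : ℕ} {M : Type} {G : SimpleGraph (Fin n)}

lemma ginv_all (e : Execution n M G) : ∀ t, GInv e t := by
  intro t
  induction t with
  | zero => exact ginv_zero e
  | succ t ih => exact ginv_succ e ih

lemma exists_lt_succ {P : ℕ → Prop} {t : ℕ} :
    (∃ t', t' < t + 1 ∧ P t') ↔ (∃ t', t' < t ∧ P t') ∨ P t := by
  constructor
  · rintro ⟨t', ht', h⟩
    rcases Nat.lt_succ_iff_lt_or_eq.1 ht' with h' | rfl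
    · exact Or.inl ⟨t', h', h⟩
    · exact Or.inr h
  · rintro (⟨t', ht', h⟩ | h)
    · exact ⟨t', Nat.lt_succ_of_lt ht', h⟩
    · exact ⟨t, Nat.lt_succ_self t, h⟩

theorem main_aux (e : Execution n M G) (i j : Fin n) (hij : i ≠ j) :
    ∀ (t tb : ℕ) (m : M), e.broadcastsAt j m tb →
      (((e.cfg tb).proc j).causal j < ((e.cfg t).proc i).causal j ↔
        ∃ t', t' < t ∧ e.deliversAt i m t') := by
  intro t
  induction t with
  | zero =>
    intro tb m hb
    rw [e.init]
    simp [initConfig]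
  | succ t ih =>
    intro tb m hb
    rw [show (∃ t', t' < t + 1 ∧ e.deliversAt i m t') ↔
        (∃ t', t' < t ∧ e.deliversAt i m t') ∨ e.deliversAt i m t from exists_lt_succ]
    cases hl : e.lbl t with
    | none =>
      have hnd : ¬ e.deliversAt i m t := by
        rintro ⟨tp, -, hEq⟩; rw [hl] at hEq; cases hEq
      rw [cfg_of_none e hl]
      simp only [hnd, or_false]
      exact ih tb m hb
    | some l =>
      have hs := step_of_lbl e hl
      generalize hcg : e.cfg (t + 1) = c' at hs
      cases hs with
      | broadcast i1 m1 =>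
        rw [← hcg]
        have hnd : ¬ e.deliversAt i m t := by
          rintro ⟨tp, -, hEq⟩; rw [hl] at hEq; simp at hEq
        have hcaus : ((e.cfg (t+1)).proc i).causal j = ((e.cfg t).proc i).causal j := by
          rw [hcg]
          by_cases h : i = i1
          · subst h
            have : j ≠ i := hij.symm
            simp [Function.update_apply, this]
          · simp [Function.update_apply, h]
        rw [hcaus]
        simp only [hnd, or_false]
        exact ih tb m hb
      | recvToco i1 j1 tp1 rest hh =>
        rw [← hcg]
        have hnd : ¬ e.deliversAt i m t := by
          rintro ⟨tp, -, hEq⟩; rw [hl] at hEq; simp at hEq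
        have hcaus : ((e.cfg (t+1)).proc i).causal j = ((e.cfg t).proc i).causal j := by
          rw [hcg]
          by_cases h : i = i1 <;> simp [Function.update_apply, h]
        rw [hcaus]
        simp only [hnd, or_false]
        exact ih tb m hb
      | recvCatchup i1 j1 d1 s1 rest hh =>
        rw [← hcg]
        have hnd : ¬ e.deliversAt i m t := by
          rintro ⟨tp, -, hEq⟩; rw [hl] at hEq; simp at hEq
        have hcaus : ((e.cfg (t+1)).proc i).causal j = ((e.cfg t).proc i).causal j := by
          rw [hcg]
          by_cases h : i = i1 <;> simp [Function.update_apply, h]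
        rw [hcaus]
        simp only [hnd, or_false]
        exact ih tb m hb
      | deliver i1 tp1 hT2 hmin =>
        rw [← hcg]
        have inv := ginv_all e t
        have hb' : e.lbl tb = some (Label.broadcast j m) := hb
        by_cases hii : i1 = i
        · subst hii
          -- the delivering process is i
          obtain ⟨tb0, htb0, hOr0⟩ := inv.orig tp1 (Or.inl ⟨i1, hT2.1.1.1⟩)
          by_cases hm : tp1.msg = m
          · -- tp1 is the tuple of m
            have htbeq : tb0 = tb :=
              e.uniqueBcast m tp1.sender j tb0 tb (by rw [← hm]; exact hOr0.1) hb
            subst htbeq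
            have hsj : tp1.sender = j := by
              have h3 := Option.some.inj (hOr0.1.symm.trans hb')
              exact (Label.broadcast.inj h3).1
            have hle : ((e.cfg tb0).proc j).causal j ≤ ((e.cfg t).proc i1).causal j := by
              have h1 := hT2.1.1.2 j
              rw [hOr0.2.1, hsj] at h1
              exact h1
            have hji' : ¬ j = i1 := fun h => hij h.symm
            have hji : ¬ tp1.sender = i1 := by rw [hsj]; exact fun h => hij h.symm
            have hcaus : ((e.cfg (t+1)).proc i1).causal j
                = ((e.cfg t).proc i1).causal j + 1 := by
              rw [hcg]
              simp [Function.update_apply, hji, hsj, hji']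
            rw [hcaus]
            have hdel : e.deliversAt i1 m t := ⟨tp1, hm, hl⟩
            constructor
            · intro _; exact Or.inr hdel
            · intro _; omega
          · -- tp1 carries a different message
            have hnd : ¬ e.deliversAt i1 m t := by
              rintro ⟨tp, htpm, hEq⟩
              rw [hl] at hEq
              obtain ⟨-, h2⟩ := Label.deliver.inj (Option.some.inj hEq)
              exact hm (h2 ▸ htpm)
            simp only [hnd, or_false]
            by_cases hsj : tp1.sender = j
            · -- delivering a (different) tuple from j
              have hndel : ¬ Delivered e i1 tp1 t := fun hD => inv.pd i1 tp1 hD hT2.1.1.1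
              have hnd2 : ¬ ∃ t', t' < t ∧ e.deliversAt i1 tp1.msg t' := by
                rintro ⟨t', ht', tp', htpm', hEq'⟩
                obtain ⟨tb1, htb1, hOr1⟩ := inv.odel i1 tp' t' ht' hEq'
                obtain ⟨-, hteq⟩ := origin_unique e hOr1 hOr0 htpm'
                exact hndel ⟨t', ht', by rw [← hteq]; exact hEq'⟩
              have hb0 : e.broadcastsAt j tp1.msg tb0 := by
                unfold Execution.broadcastsAt
                rw [← hsj]; exact hOr0.1
              have hb0' : e.lbl tb0 = some (Label.broadcast j tp1.msg) := hb0
              have hih0 := ih tb0 tp1.msg hb0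
              have hge : ¬ ((e.cfg tb0).proc j).causal j < ((e.cfg t).proc i1).causal j := by
                rw [hih0]; exact hnd2
              have hle : tp1.scaus j ≤ ((e.cfg t).proc i1).causal j := hT2.1.1.2 j
              have hscaus : tp1.scaus j = ((e.cfg tb0).proc j).causal j := by
                rw [hOr0.2.1, hsj]
              have hneq : ((e.cfg tb).proc j).causal j ≠ ((e.cfg t).proc i1).causal j := by
                intro hEqC
                have htbne : tb ≠ tb0 := by
                  intro hteq
                  apply hm
                  have h2 : e.lbl tb0 = some (Label.broadcast j m) := by
                    rw [← hteq]; exact hb'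
                  have h3 := Option.some.inj (hOr0.1.symm.trans h2)
                  exact (Label.broadcast.inj h3).2
                rcases lt_or_gt_of_ne htbne with hlt | hgt
                · have h1 := causal_bcast e hb'
                  have h2 := causal_mono e j j (show tb + 1 ≤ tb0 from hlt)
                  omega
                · have h1 := causal_bcast e hb0'
                  have h2 := causal_mono e j j (show tb0 + 1 ≤ tb from hgt)
                  omega
              have hji' : ¬ j = i1 := fun h => hij h.symm
              have hji : ¬ tp1.sender = i1 := by rw [hsj]; exact fun h => hij h.symm
              have hcaus : ((e.cfg (t+1)).proc i1).causal j
                  = ((e.cfg t).proc i1).causal j + 1 := by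
                rw [hcg]
                simp [Function.update_apply, hji, hsj, hji']
              rw [hcaus]
              have hihm := ih tb m hb
              constructor
              · intro h
                have hlt : ((e.cfg tb).proc j).causal j < ((e.cfg t).proc i1).causal j := by
                  omega
                exact hihm.1 hlt
              · intro h
                have := hihm.2 h
                omega
            · -- delivering a tuple from another sender
              have hcaus : ((e.cfg (t+1)).proc i1).causal j
                  = ((e.cfg t).proc i1).causal j := by
                rw [hcg]
                by_cases h : tp1.sender = i1
                · simp [Function.update_apply, h]
                · have hji' : ¬ j = tp1.sender := fun hc => hsj hc.symm
                  simp [Function.update_apply, h, hji']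
              rw [hcaus]
              exact ih tb m hb
        · -- another process delivers
          have hnd : ¬ e.deliversAt i m t := by
            rintro ⟨tp, -, hEq⟩
            rw [hl] at hEq
            exact hii (Label.deliver.inj (Option.some.inj hEq)).1
          have hcaus : ((e.cfg (t+1)).proc i).causal j = ((e.cfg t).proc i).causal j := by
            rw [hcg]
            have h : ¬ i = i1 := fun h => hii h.symm
            simp [Function.update_apply, h]
          rw [hcaus]
          simp only [hnd, or_false]
          exact ih tb m hb

end Fisheye

namespace Fisheye

/-- **Lemma 3.**  In any execution of Algorithm 1, for any two distinct
processes `p_i ≠ p_j` and any message `m` toco-broadcast by `p_j` (at time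
`tb`, hence with attached causal vector `s_caus_j^m[·] = causal_j[·]` of
configuration `cfg tb`), at every point `t` of the execution (all configurations
lie outside the atomic delivery step), `s_caus_j^m[j] < causal_i[j]` iff `p_i`
has already toco-delivered `m`. -/
theorem scaus_lt_causal_iff_delivered {n : ℕ} {M : Type} {G : SimpleGraph (Fin n)}
    (e : Execution n M G) :
    ∀ (i j : Fin n), i ≠ j → ∀ (tb : ℕ) (m : M), e.broadcastsAt j m tb →
      ∀ t : ℕ,
        (((e.cfg tb).proc j).causal j < ((e.cfg t).proc i).causal j ↔
          ∃ t', t' < t ∧ e.deliversAt i m t') := by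
  intro i j hij tb m hb t
  exact main_aux e i j hij t tb m hb


end Fisheye
end
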